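/- Let n ≥ 1. For all integers m ≥ 0 and 1 ≤ i ≤ n+1, one has ϖ^{2+m}·Matₙ(R) ⊆ Π^{i+nm}·𝔦 as subsets of Matₙ(R). Consequently the congruence subgroup {1 + x : x ∈ ϖ^{2+m}Matₙ(R)} of GLₙ(R) is contained in the subgroup {1 + y : y ∈ Π^{i+nm}𝔦}. -/

import Mathlib

open IsLocalRing

variable (R : Type*) [CommRing R] [IsDomain R] [IsDiscreteValuationRing R]

/-- The Iwahori order `𝔦`, as a set: matrices over `R` whose entries strictly below the
diagonal lie in the maximal ideal `𝔪`. -/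
def iw (n : ℕ) : Set (Matrix (Fin n) (Fin n) R) :=
  {M | ∀ i j : Fin n, (j : ℕ) < (i : ℕ) → M i j ∈ maximalIdeal R}

/-- The unit group `U_𝔦` of the Iwahori order: matrices `u ∈ 𝔦` invertible with
inverse in `𝔦`. -/
def Uiw (n : ℕ) : Set (Matrix (Fin n) (Fin n) R) :=
  {u | u ∈ iw R n ∧ ∃ v ∈ iw R n, u * v = 1 ∧ v * u = 1}

/-- The matrix `Π`, with `(i, i+1)`-entries `1`, `(n,1)`-entry `ϖ` and all other
entries `0`. -/
def PiMat (ϖ : R) (n : ℕ) : Matrix (Fin n) (Fin n) R :=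
  Matrix.of fun i j => if (j : ℕ) = (i : ℕ) + 1 then 1
    else if (i : ℕ) = n - 1 ∧ (j : ℕ) = 0 then ϖ else 0

/-- Explicit formula for the entries of `Π^k`. -/
lemma piMat_pow_apply (ϖ : R) (n : ℕ) (hn : 0 < n) (k : ℕ) (i j : Fin n) :
    (PiMat R ϖ n ^ k) i j =
      if ((i : ℕ) + k) % n = (j : ℕ) then ϖ ^ (((i : ℕ) + k) / n) else 0 := by
  induction k generalizing i j with
  | zero =>
      simp only [pow_zero, Matrix.one_apply, Nat.add_zero,
        Nat.mod_eq_of_lt i.isLt, Nat.div_eq_of_lt i.isLt, pow_zero, Fin.ext_iff]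
  | succ k ih =>
      rw [pow_succ, Matrix.mul_apply]
      have hr : ((i : ℕ) + k) % n < n := Nat.mod_lt _ hn
      set r : ℕ := ((i : ℕ) + k) % n with hrdef
      set q : ℕ := ((i : ℕ) + k) / n with hqdef
      have hdm : n * q + r = (i : ℕ) + k := Nat.div_add_mod _ n
      set s0 : Fin n := ⟨r, hr⟩ with hs0
      rw [Finset.sum_eq_single s0]
      · have h1 : (PiMat R ϖ n ^ k) i s0 = ϖ ^ q := by
          rw [ih]; simp [hs0, ← hrdef, ← hqdef]
        rw [h1]
        by_cases hcase : r + 1 = n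
        · have hik : (i : ℕ) + (k + 1) = n * (q + 1) := by
            have : n * (q + 1) = n * q + n := by ring
            omega
          have hmod : ((i : ℕ) + (k + 1)) % n = 0 := by
            rw [hik, Nat.mul_mod_right]
          have hdiv : ((i : ℕ) + (k + 1)) / n = q + 1 := by
            rw [hik, Nat.mul_div_cancel_left _ hn]
          rw [hmod, hdiv]
          have hpi : PiMat R ϖ n s0 j = if (j : ℕ) = 0 then ϖ else 0 := by
            simp only [PiMat, Matrix.of_apply, hs0]
            have : ¬ ((j : ℕ) = r + 1) := by have := j.isLt; omega
            rw [if_neg this]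
            by_cases hj : (j : ℕ) = 0
            · rw [if_pos ⟨by omega, hj⟩, if_pos hj]
            · rw [if_neg (by tauto), if_neg hj]
          rw [hpi]
          by_cases hj : (j : ℕ) = 0
          · rw [if_pos hj, if_pos hj.symm, pow_succ]
          · rw [if_neg hj, if_neg (fun h => hj h.symm), mul_zero]
        · have hr1 : r + 1 < n := by omega
          have hik : (i : ℕ) + (k + 1) = n * q + (r + 1) := by omega
          have hmod : ((i : ℕ) + (k + 1)) % n = r + 1 := by
            rw [hik, Nat.mul_add_mod, Nat.mod_eq_of_lt hr1]
          have hdiv : ((i : ℕ) + (k + 1)) / n = q := by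
            rw [hik, Nat.mul_add_div hn, Nat.div_eq_of_lt hr1, Nat.add_zero]
          rw [hmod, hdiv]
          have hpi : PiMat R ϖ n s0 j = if (j : ℕ) = r + 1 then 1 else 0 := by
            simp only [PiMat, Matrix.of_apply, hs0]
            by_cases hj : (j : ℕ) = r + 1
            · rw [if_pos hj, if_pos hj]
            · rw [if_neg hj, if_neg hj, if_neg (by omega)]
          rw [hpi]
          by_cases hj : (j : ℕ) = r + 1
          · rw [if_pos hj, if_pos hj.symm, mul_one]
          · rw [if_neg hj, if_neg (fun h => hj h.symm), mul_zero]
      · intro s _ hs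
        rw [ih, if_neg, zero_mul]
        intro h
        exact hs (Fin.ext h.symm)
      · intro h; exact absurd (Finset.mem_univ s0) h

/-- `Π^{n·t}` is the scalar matrix `ϖ^t • 1`. -/
lemma piMat_pow_mul_n (ϖ : R) (n : ℕ) (hn : 0 < n) (t : ℕ) :
    PiMat R ϖ n ^ (n * t) = ϖ ^ t • (1 : Matrix (Fin n) (Fin n) R) := by
  ext i j
  rw [piMat_pow_apply R ϖ n hn]
  have hmod : ((i : ℕ) + n * t) % n = (i : ℕ) := by
    rw [Nat.add_mul_mod_self_left, Nat.mod_eq_of_lt i.isLt]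
  have hdiv : ((i : ℕ) + n * t) / n = t := by
    rw [Nat.add_mul_div_left _ _ hn, Nat.div_eq_of_lt i.isLt, Nat.zero_add]
  rw [hmod, hdiv]
  simp only [Matrix.smul_apply, Matrix.one_apply, Fin.ext_iff, smul_eq_mul]
  by_cases h : (i : ℕ) = (j : ℕ)
  · rw [if_pos h, if_pos h, mul_one]
  · rw [if_neg h, if_neg h, mul_zero]

/-- Rows of `Π^k` with `i + k ≥ n` have all entries in the maximal ideal. -/
lemma piMat_pow_mem (ϖ : R) (hϖ : Ideal.span {ϖ} = maximalIdeal R) (n : ℕ) (hn : 0 < n)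
    (k : ℕ) (i j : Fin n) (h : n ≤ (i : ℕ) + k) :
    (PiMat R ϖ n ^ k) i j ∈ maximalIdeal R := by
  rw [piMat_pow_apply R ϖ n hn]
  have hϖm : ϖ ∈ maximalIdeal R := hϖ ▸ Ideal.mem_span_singleton_self ϖ
  split_ifs with hc
  · have hd : 1 ≤ ((i : ℕ) + k) / n := Nat.one_le_div_iff hn |>.mpr h
    have : ϖ ^ (((i : ℕ) + k) / n) = ϖ * ϖ ^ (((i : ℕ) + k) / n - 1) := by
      rw [← pow_succ']
      congr 1
      omega
    rw [this]
    exact Ideal.mul_mem_right _ _ hϖm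
  · exact Submodule.zero_mem _

/-- For all `m ≥ 0` and `1 ≤ i ≤ n+1` one has
`ϖ^{2+m}·Matₙ(R) ⊆ Π^{i+nm}·𝔦`; consequently the congruence subgroup
`1 + ϖ^{2+m}Matₙ(R)` is contained in `1 + Π^{i+nm}𝔦`. -/
theorem scalar_pow_matR_subset_piPow_iwahori (ϖ : R)
    (hϖ : Ideal.span {ϖ} = maximalIdeal R)
    (n : ℕ) (hn : 1 ≤ n) (m : ℕ) (i : ℕ) (hi1 : 1 ≤ i) (hi2 : i ≤ n + 1) :
    ({A : Matrix (Fin n) (Fin n) R | ∃ B : Matrix (Fin n) (Fin n) R, A = ϖ ^ (2 + m) • B} ⊆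
      (fun x => (PiMat R ϖ n) ^ (i + n * m) * x) '' iw R n) ∧
    ({A : Matrix (Fin n) (Fin n) R |
        ∃ x : Matrix (Fin n) (Fin n) R,
          (∃ B : Matrix (Fin n) (Fin n) R, x = ϖ ^ (2 + m) • B) ∧ A = 1 + x} ⊆
      {A : Matrix (Fin n) (Fin n) R |
        ∃ y ∈ (fun x => (PiMat R ϖ n) ^ (i + n * m) * x) '' iw R n, A = 1 + y}) := by
  have hn0 : 0 < n := hn
  have hfirst : {A : Matrix (Fin n) (Fin n) R |
      ∃ B : Matrix (Fin n) (Fin n) R, A = ϖ ^ (2 + m) • B} ⊆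
      (fun x => (PiMat R ϖ n) ^ (i + n * m) * x) '' iw R n := by
    rintro A ⟨B, rfl⟩
    refine ⟨PiMat R ϖ n ^ (2 * n - i) * B, ?_, ?_⟩
    · intro a b hab
      rw [Matrix.mul_apply]
      refine Ideal.sum_mem _ fun s _ => Ideal.mul_mem_right _ _ ?_
      exact piMat_pow_mem R ϖ hϖ n hn0 _ a s (by omega)
    · show PiMat R ϖ n ^ (i + n * m) * (PiMat R ϖ n ^ (2 * n - i) * B) = _
      rw [← mul_assoc, ← pow_add]
      have hexp : i + n * m + (2 * n - i) = n * (m + 2) := by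
        have : n * (m + 2) = n * m + 2 * n := by ring
        omega
      rw [hexp, piMat_pow_mul_n R ϖ n hn0, Matrix.smul_mul, Matrix.one_mul]
      rw [show 2 + m = m + 2 by omega]
  refine ⟨hfirst, ?_⟩
  rintro A ⟨x, hx, rfl⟩
  exact ⟨x, hfirst hx, rfl⟩
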